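/- Let n ∈ ℕ and let W = {w_1, …, w_n}, M = {m_1, …, m_n}, W' = {w'_1, …, w'_n}, M' = {m'_1, …, m'_n} be pairwise disjoint sets. Let μ_id be the perfect marriage between W and M marrying w_i to m_i for every i, and let μ_id' be the perfect marriage between W ∪ W' and M ∪ M' marrying w_i to m_i and w'_i to m'_i for every i. Given a profile P_W of partial preference lists for W over M and a profile P_M for M over W, define full preference lists on W ∪ W' over M ∪ M': the list of w_i is her list in P_W, followed by m'_i, followed by all remaining men sorted by index; the list of w'_i is m_i followed by all remaining men sorted by index; symmetrically for the men. Then: (a) if μ_id is the unique stable marriage with respect to P_W and P_M, then μ_id' is the unique stable marriage with respect to the constructed full preference lists; and (b) if μ_id is unstable with respect to P_W and P_M, then μ_id' is unstable with respect to the constructed full preference lists. -/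

import Mathlib

/-- `listPref l a b`: in the (possibly partial) preference list `l`
(most-preferred first), `a` is preferred over `b`: `a` is on the list, and
either `b` is not on the list or `a` precedes `b` on it. -/
def listPref {α : Type} [DecidableEq α] (l : List α) (a b : α) : Prop :=
  a ∈ l ∧ (b ∈ l → l.idxOf a < l.idxOf b)

/-- A marriage between (a subset of) the women `Fin nw` and (a subset of) the
men `Fin nm`: `μ i = some j` means woman `i` is married to man `j`, and
`μ i = none` means woman `i` is single; no two women share a husband. -/
def IsMarriage {nw nm : ℕ} (μ : Fin nw → Option (Fin nm)) : Prop :=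
  ∀ i i' j, μ i = some j → μ i' = some j → i = i'

/-- Stability of a marriage `μ` with respect to (possibly partial) preference
lists `wL` (women's lists of men) and `mL` (men's lists of women): every married
participant is married to someone on their own list, and there is no blocking
pair, i.e. no pair `(i, j)`, with `j` on `i`'s list and `i` on `j`'s list, such
that woman `i` is single or prefers `j` over her spouse, and man `j` is single
or prefers `i` over his spouse. -/
def StableL {nw nm : ℕ} (wL : Fin nw → List (Fin nm)) (mL : Fin nm → List (Fin nw))
    (μ : Fin nw → Option (Fin nm)) : Prop :=
  (∀ i j, μ i = some j → j ∈ wL i ∧ i ∈ mL j) ∧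
  ¬∃ (i : Fin nw) (j : Fin nm),
      j ∈ wL i ∧ i ∈ mL j ∧
      (∀ j', μ i = some j' → listPref (wL i) j j') ∧
      (∀ i', μ i' = some j → listPref (mL j) i i')

/-- Append to the list `l` all the remaining elements of `Fin N`, sorted by index. -/
def completeL {N : ℕ} (l : List (Fin N)) : List (Fin N) :=
  l ++ (List.finRange N).filter (fun a => !(l.contains a))

/-- Extension of a profile `L` of partial preference lists on `Fin n` to a profile
of full preference lists on `Fin (n + n)`.  On each side, participant `i < n` is
an original participant (`w_{i+1}` resp. `m_{j+1}`) and participant `n + i` is a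
primed participant (`w'_{i+1}` resp. `m'_{j+1}`).  The full list of `w_i` is her
original list (in the same order), then `m'_i`, then all remaining men sorted by
index; the full list of `w'_i` is `m_i` followed by all remaining men sorted by
index.  The men's lists are extended by the same construction. -/
def extL (n : ℕ) (L : Fin n → List (Fin n)) : Fin (n + n) → List (Fin (n + n)) :=
  fun i =>
    if h : i.val < n then
      completeL (((L ⟨i.val, h⟩).map (Fin.castAdd n)) ++ [Fin.natAdd n ⟨i.val, h⟩])
    else
      completeL [Fin.castAdd n ⟨i.val - n, by have := i.isLt; omega⟩]


namespace Ext


variable {N : ℕ}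

lemma mem_completeL (l : List (Fin N)) (a : Fin N) : a ∈ completeL l := by
  by_cases h : a ∈ l
  · exact List.mem_append_left _ h
  · refine List.mem_append_right _ ?_
    simp [h]

lemma indexOf_completeL_of_mem {l : List (Fin N)} {a : Fin N} (h : a ∈ l) :
    (completeL l).idxOf a = l.idxOf a :=
  List.idxOf_append_of_mem h

lemma indexOf_completeL_of_not_mem {l : List (Fin N)} {a : Fin N} (h : a ∉ l) :
    (completeL l).idxOf a =
      l.length + (((List.finRange N).filter (fun a => !(l.contains a))).idxOf a) :=
  List.idxOf_append_of_notMem h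

lemma length_le_indexOf_completeL {l : List (Fin N)} {a : Fin N} (h : a ∉ l) :
    l.length ≤ (completeL l).idxOf a := by
  rw [indexOf_completeL_of_not_mem h]; omega

lemma indexOf_lt_of_pairwise {l : List (Fin N)} (hl : l.Pairwise (· < ·))
    {a b : Fin N} (ha : a ∈ l) (hb : b ∈ l) (hab : a < b) :
    l.idxOf a < l.idxOf b := by
  induction l with
  | nil => simp at ha
  | cons c t ih =>
    rcases List.pairwise_cons.1 hl with ⟨hc, ht⟩
    by_cases hac : c = a
    · subst hac
      have hbc : (c == b) = false := by
        simp only [beq_eq_false_iff_ne]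
        intro h; exact absurd (h ▸ hab) (lt_irrefl _)
      rw [List.idxOf_cons, List.idxOf_cons, hbc]
      simp
    · have ha' : a ∈ t := by
        rcases List.mem_cons.1 ha with h | h
        · exact absurd h.symm hac
        · exact h
      have hb' : b ∈ t := by
        rcases List.mem_cons.1 hb with h | h
        · exact absurd (h ▸ hab) (not_lt.2 (le_of_lt (hc a ha')))
        · exact h
      have h1 : (c == a) = false := by
        simp only [beq_eq_false_iff_ne]; exact hac
      have h2 : (c == b) = false := by
        simp only [beq_eq_false_iff_ne]
        intro h; exact absurd (h ▸ hc b hb') (lt_irrefl _)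
      rw [List.idxOf_cons, List.idxOf_cons, h1, h2]
      simpa using ih ht ha' hb'

lemma indexOf_completeL_lt_of_not_mem {l : List (Fin N)} {a b : Fin N}
    (ha : a ∉ l) (hb : b ∉ l) (hab : a < b) :
    (completeL l).idxOf a < (completeL l).idxOf b := by
  rw [indexOf_completeL_of_not_mem ha, indexOf_completeL_of_not_mem hb]
  have hmem : ∀ x : Fin N, x ∉ l → x ∈ (List.finRange N).filter (fun a => !(l.contains a)) := by
    intro x hx
    simp [hx]
  have := indexOf_lt_of_pairwise ((List.pairwise_lt_finRange N).filter _)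
    (hmem a ha) (hmem b hb) hab
  omega

lemma indexOf_map_castAdd {n : ℕ} (l : List (Fin n)) (a : Fin n) :
    (l.map (Fin.castAdd n)).idxOf (Fin.castAdd n a) = l.idxOf a := by
  induction l with
  | nil => rfl
  | cons b t ih =>
    rw [List.map_cons, List.idxOf_cons, List.idxOf_cons]
    have : (Fin.castAdd n b == Fin.castAdd n a) = (b == a) := by
      simp [beq_iff_eq, Fin.ext_iff]
    rw [this]
    cases h : (b == a) <;> simp [ih]

lemma mem_map_castAdd {n : ℕ} {l : List (Fin n)} {a : Fin n} :
    Fin.castAdd n a ∈ l.map (Fin.castAdd n) ↔ a ∈ l := by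
  constructor
  · intro h
    rcases List.mem_map.1 h with ⟨x, hx, hxa⟩
    have : x = a := by simpa [Fin.ext_iff] using hxa
    exact this ▸ hx
  · exact fun h => List.mem_map.2 ⟨a, h, rfl⟩

lemma natAdd_not_mem_map_castAdd {n : ℕ} (l : List (Fin n)) (k : Fin n) :
    Fin.natAdd n k ∉ l.map (Fin.castAdd n) := by
  intro h
  rcases List.mem_map.1 h with ⟨x, _, hx⟩
  have := congrArg Fin.val hx
  simp at this
  omega

lemma castAdd_ne_natAdd {n : ℕ} (a k : Fin n) : Fin.castAdd n a ≠ Fin.natAdd n k := by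
  intro h
  have := congrArg Fin.val h
  simp at this
  omega



variable {n : ℕ} {L : Fin n → List (Fin n)}

lemma extL_castAdd (L : Fin n → List (Fin n)) (i : Fin n) :
    extL n L (Fin.castAdd n i) =
      completeL ((L i).map (Fin.castAdd n) ++ [Fin.natAdd n i]) := by
  have h : (Fin.castAdd n i).val < n := i.isLt
  simp only [extL, Fin.coe_castAdd, Fin.eta]
  rw [dif_pos i.isLt]

lemma extL_natAdd (L : Fin n → List (Fin n)) (k : Fin n) :
    extL n L (Fin.natAdd n k) = completeL [Fin.castAdd n k] := by
  have h : ¬ (Fin.natAdd n k).val < n := by simp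
  simp only [extL, dif_neg h]
  congr 2
  apply Fin.ext
  show n + k.val - n = k.val
  omega

lemma casesAdd (i : Fin (n + n)) :
    (∃ i0 : Fin n, i = Fin.castAdd n i0) ∨ ∃ i0 : Fin n, i = Fin.natAdd n i0 := by
  by_cases h : i.val < n
  · exact Or.inl ⟨⟨i.val, h⟩, Fin.ext rfl⟩
  · exact Or.inr ⟨⟨i.val - n, by have := i.isLt; omega⟩,
      Fin.ext (by show i.val = n + (i.val - n); omega)⟩

lemma mem_extL (L : Fin n → List (Fin n)) (i : Fin (n + n)) (x : Fin (n + n)) :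
    x ∈ extL n L i := by
  unfold extL; split <;> exact mem_completeL _ _

lemma idx_orig_mem {i a : Fin n} (ha : a ∈ L i) :
    (extL n L (Fin.castAdd n i)).idxOf (Fin.castAdd n a) = (L i).idxOf a := by
  rw [extL_castAdd,
    indexOf_completeL_of_mem (List.mem_append_left _ (mem_map_castAdd.2 ha)),
    List.idxOf_append_of_mem (mem_map_castAdd.2 ha)]
  exact indexOf_map_castAdd _ _

lemma idx_orig_natAdd_self (i : Fin n) :
    (extL n L (Fin.castAdd n i)).idxOf (Fin.natAdd n i) = (L i).length := by
  rw [extL_castAdd,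
    indexOf_completeL_of_mem (List.mem_append_right _ (List.mem_singleton_self _)),
    List.idxOf_append_of_notMem (natAdd_not_mem_map_castAdd _ _)]
  simp

lemma idx_orig_not_mem {i b : Fin n} (hb : b ∉ L i) :
    (L i).length + 1 ≤ (extL n L (Fin.castAdd n i)).idxOf (Fin.castAdd n b) := by
  rw [extL_castAdd]
  have hnot : Fin.castAdd n b ∉ (L i).map (Fin.castAdd n) ++ [Fin.natAdd n i] := by
    simp only [List.mem_append, List.mem_singleton]
    rintro (h | h)
    · exact hb (mem_map_castAdd.1 h)
    · exact castAdd_ne_natAdd b i h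
  have := length_le_indexOf_completeL hnot
  simpa using this

lemma idx_orig_natAdd_other {i k : Fin n} (hk : k ≠ i) :
    (L i).length + 1 ≤ (extL n L (Fin.castAdd n i)).idxOf (Fin.natAdd n k) := by
  rw [extL_castAdd]
  have hnot : Fin.natAdd n k ∉ (L i).map (Fin.castAdd n) ++ [Fin.natAdd n i] := by
    simp only [List.mem_append, List.mem_singleton]
    rintro (h | h)
    · exact natAdd_not_mem_map_castAdd _ _ h
    · exact hk (Fin.ext (by have := congrArg Fin.val h; simpa using this))
  have := length_le_indexOf_completeL hnot
  simpa using this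

lemma idx_orig_natAdd_ge (i k : Fin n) :
    (L i).length ≤ (extL n L (Fin.castAdd n i)).idxOf (Fin.natAdd n k) := by
  by_cases hk : k = i
  · subst hk; rw [idx_orig_natAdd_self]
  · have := idx_orig_natAdd_other (L := L) hk; omega

lemma idx_primed_self (k : Fin n) :
    (extL n L (Fin.natAdd n k)).idxOf (Fin.castAdd n k) = 0 := by
  rw [extL_natAdd, indexOf_completeL_of_mem (List.mem_singleton_self _)]
  simp

lemma idx_primed_pos {k : Fin n} {x : Fin (n + n)} (hx : x ≠ Fin.castAdd n k) :
    0 < (extL n L (Fin.natAdd n k)).idxOf x := by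
  rw [extL_natAdd]
  have h : x ∉ [Fin.castAdd n k] := by simpa using hx
  have := length_le_indexOf_completeL h
  simp at this
  omega

lemma idx_primed_lt {k : Fin n} {x y : Fin (n + n)} (hx : x ≠ Fin.castAdd n k)
    (hy : y ≠ Fin.castAdd n k) (hxy : x < y) :
    (extL n L (Fin.natAdd n k)).idxOf x < (extL n L (Fin.natAdd n k)).idxOf y := by
  rw [extL_natAdd]
  exact indexOf_completeL_lt_of_not_mem (by simpa using hx) (by simpa using hy) hxy

lemma natAdd_lt_natAdd {k l : Fin n} (h : k < l) :
    Fin.natAdd n k < Fin.natAdd n l := by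
  rw [Fin.lt_def]
  simp only [Fin.coe_natAdd]
  exact Nat.add_lt_add_left h n

lemma lt_of_idx_primed {k l : Fin n}
    (h : (extL n L (Fin.natAdd n k)).idxOf (Fin.natAdd n l)
        < (extL n L (Fin.natAdd n k)).idxOf (Fin.natAdd n k)) : l < k := by
  by_contra hnot
  rcases eq_or_lt_of_le (not_lt.1 hnot) with he | hlt
  · rw [he] at h; exact lt_irrefl _ h
  · have := idx_primed_lt (L := L) (Ne.symm (castAdd_ne_natAdd k k))
      (Ne.symm (castAdd_ne_natAdd k l)) (natAdd_lt_natAdd hlt)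
    omega

lemma idx_lt_lift {i a b : Fin n} (hab : listPref (L i) a b) :
    (extL n L (Fin.castAdd n i)).idxOf (Fin.castAdd n a)
      < (extL n L (Fin.castAdd n i)).idxOf (Fin.castAdd n b) := by
  obtain ⟨ha, h2⟩ := hab
  have hlt : (L i).idxOf a < (L i).length := List.idxOf_lt_length_iff.2 ha
  rw [idx_orig_mem ha]
  by_cases hb : b ∈ L i
  · rw [idx_orig_mem hb]; exact h2 hb
  · have := idx_orig_not_mem (L := L) hb; omega

lemma listPref_unlift {i a b : Fin n} (hb : b ∈ L i)
    (h : (extL n L (Fin.castAdd n i)).idxOf (Fin.castAdd n a)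
        < (extL n L (Fin.castAdd n i)).idxOf (Fin.castAdd n b)) :
    listPref (L i) a b := by
  have hbl : (L i).idxOf b < (L i).length := List.idxOf_lt_length_iff.2 hb
  have ha : a ∈ L i := by
    by_contra ha
    have h1 := idx_orig_not_mem (L := L) ha
    rw [idx_orig_mem hb] at h
    omega
  exact ⟨ha, fun _ => by rw [idx_orig_mem ha, idx_orig_mem hb] at h; exact h⟩

/-- restriction of a marriage on the extended sets to the original sets -/
def restrictμ (n : ℕ) (μ : Fin (n + n) → Option (Fin (n + n))) :
    Fin n → Option (Fin n) :=
  fun i => (μ (Fin.castAdd n i)).bind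
    (fun m => if h : m.val < n then some ⟨m.val, h⟩ else none)

lemma restrictμ_eq_some {n : ℕ} {μ : Fin (n + n) → Option (Fin (n + n))}
    {i j : Fin n} :
    restrictμ n μ i = some j ↔ μ (Fin.castAdd n i) = some (Fin.castAdd n j) := by
  unfold restrictμ
  cases h : μ (Fin.castAdd n i) with
  | none => simp
  | some m =>
    simp only [Option.bind_some, Option.some.injEq]
    split_ifs with hm
    · simp only [Option.some.injEq]
      constructor
      · rintro rfl
        exact Fin.ext rfl
      · rintro rfl
        exact Fin.ext rfl
    · constructor
      · intro h'
        cases h'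
      · rintro rfl
        exact absurd j.isLt hm


end Ext

open Ext

/-- Let `μ_id` be the marriage marrying `w_i` to `m_i` for every `i`, and `μ_id'`
the perfect marriage on `W ∪ W'` and `M ∪ M'` marrying `w_i` to `m_i` and `w'_i`
to `m'_i` for every `i` (under the indexing of `extL`, both are the identity).
(a) If `μ_id` is the unique stable marriage with respect to the (possibly partial,
duplicate-free) profiles `wL`, `mL`, then `μ_id'` is the unique stable marriage
with respect to the constructed full preference lists; (b) if `μ_id` is unstable
with respect to `wL`, `mL`, then `μ_id'` is unstable with respect to the
constructed full preference lists. -/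
theorem extended_identity_unique_stable_or_unstable (n : ℕ)
    (wL : Fin n → List (Fin n)) (mL : Fin n → List (Fin n))
    (hw : ∀ i, (wL i).Nodup) (hm : ∀ j, (mL j).Nodup) :
    ((StableL wL mL (fun i => some i) ∧
        ∀ μ : Fin n → Option (Fin n), IsMarriage μ →
          StableL wL mL μ → μ = fun i => some i) →
      (StableL (extL n wL) (extL n mL) (fun i => some i) ∧
        ∀ μ : Fin (n + n) → Option (Fin (n + n)), IsMarriage μ →
          StableL (extL n wL) (extL n mL) μ → μ = fun i => some i)) ∧
    (¬StableL wL mL (fun i => some i) →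
      ¬StableL (extL n wL) (extL n mL) (fun i => some i)) := by
  constructor
  · rintro ⟨hstab, huniq⟩
    have hid1 : ∀ i : Fin n, i ∈ wL i ∧ i ∈ mL i := fun i => hstab.1 i i rfl
    constructor
    · -- the identity is stable in the extension
      constructor
      · intro i j hij
        obtain rfl : i = j := Option.some.inj hij
        exact ⟨mem_extL _ _ _, mem_extL _ _ _⟩
      · rintro ⟨i, j, hjw, him, hwpref, hmpref⟩
        have hwp := hwpref i rfl
        have hmp := hmpref j rfl
        rcases casesAdd i with ⟨i0, rfl⟩ | ⟨k, rfl⟩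
        · rcases casesAdd j with ⟨j0, rfl⟩ | ⟨l, rfl⟩
          · have hw' : listPref (wL i0) j0 i0 :=
              listPref_unlift (hid1 i0).1 (hwp.2 (mem_extL _ _ _))
            have hm' : listPref (mL j0) i0 j0 :=
              listPref_unlift (hid1 j0).2 (hmp.2 (mem_extL _ _ _))
            exact hstab.2 ⟨i0, j0, hw'.1, hm'.1,
              fun j' e => by obtain rfl : i0 = j' := Option.some.inj e; exact hw',
              fun i' e => by obtain rfl : i' = j0 := Option.some.inj e; exact hm'⟩
          · have h1 := hwp.2 (mem_extL _ _ _)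
            have h2 : (wL i0).idxOf i0 < (wL i0).length :=
              List.idxOf_lt_length_iff.2 (hid1 i0).1
            rw [idx_orig_mem (hid1 i0).1] at h1
            have h3 := idx_orig_natAdd_ge (L := wL) i0 l
            omega
        · rcases casesAdd j with ⟨j0, rfl⟩ | ⟨l, rfl⟩
          · have h1 := hmp.2 (mem_extL _ _ _)
            have h2 : (mL j0).idxOf j0 < (mL j0).length :=
              List.idxOf_lt_length_iff.2 (hid1 j0).2
            rw [idx_orig_mem (hid1 j0).2] at h1
            have h3 := idx_orig_natAdd_ge (L := mL) j0 k
            omega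
          · have h1 : l < k := lt_of_idx_primed (L := wL) (hwp.2 (mem_extL _ _ _))
            have h2 : k < l := lt_of_idx_primed (L := mL) (hmp.2 (mem_extL _ _ _))
            exact absurd h1 (not_lt.2 (le_of_lt h2))
    · -- uniqueness in the extension
      intro μ hμmar hμst
      obtain ⟨hμ1, hμ2⟩ := hμst
      have lemA : ∀ i0 : Fin n,
          μ (Fin.castAdd n i0) = some (Fin.natAdd n i0) ∨
          ∃ j0 : Fin n, j0 ∈ wL i0 ∧ μ (Fin.castAdd n i0) = some (Fin.castAdd n j0) := by
        intro i0
        by_contra hcon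
        push_neg at hcon
        obtain ⟨h1, h2⟩ := hcon
        apply hμ2
        refine ⟨Fin.castAdd n i0, Fin.natAdd n i0, mem_extL _ _ _, mem_extL _ _ _, ?_, ?_⟩
        · intro j' hj'
          refine ⟨mem_extL _ _ _, fun _ => ?_⟩
          rw [idx_orig_natAdd_self]
          rcases casesAdd j' with ⟨j0, rfl⟩ | ⟨k, rfl⟩
          · have hj0 : j0 ∉ wL i0 := fun hmem => h2 j0 hmem hj'
            have := idx_orig_not_mem (L := wL) hj0
            omega
          · have hk : k ≠ i0 := fun he => h1 (he ▸ hj')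
            have := idx_orig_natAdd_other (L := wL) hk
            omega
        · intro x hx
          refine ⟨mem_extL _ _ _, fun _ => ?_⟩
          rw [idx_primed_self]
          exact idx_primed_pos (fun hxe => h1 (hxe ▸ hx))
      have lemB : ∀ (j0 : Fin n) (x : Fin (n + n)), μ x = some (Fin.castAdd n j0) →
          x = Fin.natAdd n j0 ∨ ∃ i0 : Fin n, i0 ∈ mL j0 ∧ x = Fin.castAdd n i0 := by
        intro j0 x hx
        by_contra hcon
        push_neg at hcon
        obtain ⟨h1, h2⟩ := hcon
        apply hμ2
        refine ⟨Fin.natAdd n j0, Fin.castAdd n j0, mem_extL _ _ _, mem_extL _ _ _, ?_, ?_⟩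
        · intro j' hj'
          refine ⟨mem_extL _ _ _, fun _ => ?_⟩
          rw [idx_primed_self]
          exact idx_primed_pos (fun he => h1 (hμmar x (Fin.natAdd n j0) _ hx (he ▸ hj')))
        · intro x' hx'
          have hxx : x' = x := hμmar x' x _ hx' hx
          refine ⟨mem_extL _ _ _, fun _ => ?_⟩
          rw [idx_orig_natAdd_self]
          rcases casesAdd x' with ⟨i0, rfl⟩ | ⟨k, rfl⟩
          · have hi0 : i0 ∉ mL j0 := fun hmem => h2 i0 hmem hxx.symm
            have := idx_orig_not_mem (L := mL) hi0
            omega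
          · have hk : k ≠ j0 := fun he => h1 (by rw [← hxx, he])
            have := idx_orig_natAdd_other (L := mL) hk
            omega
      have hνmar : IsMarriage (restrictμ n μ) := by
        intro i i' j h h'
        have e := hμmar (Fin.castAdd n i) (Fin.castAdd n i') (Fin.castAdd n j)
          (restrictμ_eq_some.1 h) (restrictμ_eq_some.1 h')
        exact Fin.ext (by have := congrArg Fin.val e; simpa using this)
      have hνstab : StableL wL mL (restrictμ n μ) := by
        constructor
        · intro i j hij
          have h := restrictμ_eq_some.1 hij
          constructor
          · rcases lemA i with h1 | ⟨j0, hj0, h2⟩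
            · rw [h] at h1
              exact absurd (Option.some.inj h1) (castAdd_ne_natAdd j i)
            · rw [h] at h2
              have e : j = j0 := Fin.ext
                (by have := congrArg Fin.val (Option.some.inj h2); simpa using this)
              exact e ▸ hj0
          · rcases lemB j (Fin.castAdd n i) h with h1 | ⟨i0, hi0, h2⟩
            · exact absurd h1 (castAdd_ne_natAdd i j)
            · have e : i = i0 := Fin.ext
                (by have := congrArg Fin.val h2; simpa using this)
              exact e ▸ hi0
        · rintro ⟨i0, j0, hj0, hi0, hwp, hmp⟩
          apply hμ2
          refine ⟨Fin.castAdd n i0, Fin.castAdd n j0, mem_extL _ _ _, mem_extL _ _ _, ?_, ?_⟩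
          · intro j' hj'
            refine ⟨mem_extL _ _ _, fun _ => ?_⟩
            rcases casesAdd j' with ⟨j0', rfl⟩ | ⟨k, rfl⟩
            · exact idx_lt_lift (hwp j0' (restrictμ_eq_some.2 hj'))
            · have h1 := idx_orig_natAdd_ge (L := wL) i0 k
              have h2 := List.idxOf_lt_length_iff.2 hj0
              rw [idx_orig_mem hj0]
              omega
          · intro x hx
            refine ⟨mem_extL _ _ _, fun _ => ?_⟩
            rcases casesAdd x with ⟨i0', rfl⟩ | ⟨k, rfl⟩
            · exact idx_lt_lift (hmp i0' (restrictμ_eq_some.2 hx))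
            · have h1 := idx_orig_natAdd_ge (L := mL) j0 k
              have h2 := List.idxOf_lt_length_iff.2 hi0
              rw [idx_orig_mem hi0]
              omega
      have hνid := huniq (restrictμ n μ) hνmar hνstab
      have hca : ∀ i0 : Fin n, μ (Fin.castAdd n i0) = some (Fin.castAdd n i0) := by
        intro i0
        have h : restrictμ n μ i0 = some i0 := by rw [hνid]
        exact restrictμ_eq_some.1 h
      have hprim : ∀ m : ℕ, ∀ k : Fin n, k.val = m →
          μ (Fin.natAdd n k) = some (Fin.natAdd n k) := by
        intro m
        induction m using Nat.strong_induction_on with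
        | _ m IH =>
          intro k hk
          by_contra hne
          apply hμ2
          refine ⟨Fin.natAdd n k, Fin.natAdd n k, mem_extL _ _ _, mem_extL _ _ _, ?_, ?_⟩
          · intro j' hj'
            refine ⟨mem_extL _ _ _, fun _ => ?_⟩
            rcases casesAdd j' with ⟨j0, rfl⟩ | ⟨l, rfl⟩
            · exact absurd (hμmar _ _ _ (hca j0) hj') (castAdd_ne_natAdd j0 k)
            · have hkl : k < l := by
                rcases lt_trichotomy l k with h | h | h
                · exfalso
                  have hval : l.val < k.val := Fin.lt_def.1 h
                  have e := hμmar _ _ _ (IH l.val (by omega) l rfl) hj'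
                  have := congrArg Fin.val e
                  simp only [Fin.coe_natAdd] at this
                  omega
                · exact absurd (h ▸ hj') hne
                · exact h
              exact idx_primed_lt (Ne.symm (castAdd_ne_natAdd k k))
                (Ne.symm (castAdd_ne_natAdd k l)) (natAdd_lt_natAdd hkl)
          · intro x hx
            refine ⟨mem_extL _ _ _, fun _ => ?_⟩
            rcases casesAdd x with ⟨i0, rfl⟩ | ⟨l, rfl⟩
            · exfalso
              rw [hca i0] at hx
              exact castAdd_ne_natAdd i0 k (Option.some.inj hx)
            · have hkl : k < l := by
                rcases lt_trichotomy l k with h | h | h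
                · exfalso
                  have hval : l.val < k.val := Fin.lt_def.1 h
                  have e := IH l.val (by omega) l rfl
                  rw [e] at hx
                  have := congrArg Fin.val (Option.some.inj hx)
                  simp only [Fin.coe_natAdd] at this
                  omega
                · exact absurd (h ▸ hx) hne
                · exact h
              exact idx_primed_lt (Ne.symm (castAdd_ne_natAdd k k))
                (Ne.symm (castAdd_ne_natAdd k l)) (natAdd_lt_natAdd hkl)
      funext i
      rcases casesAdd i with ⟨i0, rfl⟩ | ⟨k, rfl⟩
      · exact hca i0
      · exact hprim k.val k rfl
  · intro hns hextst
    apply hns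
    obtain ⟨hext1, hext2⟩ := hextst
    constructor
    · intro i j hij
      obtain rfl : i = j := Option.some.inj hij
      constructor
      · by_contra hiw
        apply hext2
        refine ⟨Fin.castAdd n i, Fin.natAdd n i, mem_extL _ _ _, mem_extL _ _ _, ?_, ?_⟩
        · intro j' hj'
          obtain rfl := Option.some.inj hj'
          refine ⟨mem_extL _ _ _, fun _ => ?_⟩
          rw [idx_orig_natAdd_self]
          have := idx_orig_not_mem (L := wL) hiw
          omega
        · intro x hx
          obtain rfl := Option.some.inj hx
          refine ⟨mem_extL _ _ _, fun _ => ?_⟩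
          rw [idx_primed_self]
          exact idx_primed_pos (Ne.symm (castAdd_ne_natAdd i i))
      · by_contra him
        apply hext2
        refine ⟨Fin.natAdd n i, Fin.castAdd n i, mem_extL _ _ _, mem_extL _ _ _, ?_, ?_⟩
        · intro j' hj'
          obtain rfl := Option.some.inj hj'
          refine ⟨mem_extL _ _ _, fun _ => ?_⟩
          rw [idx_primed_self]
          exact idx_primed_pos (Ne.symm (castAdd_ne_natAdd i i))
        · intro x hx
          obtain rfl := Option.some.inj hx
          refine ⟨mem_extL _ _ _, fun _ => ?_⟩
          rw [idx_orig_natAdd_self]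
          have := idx_orig_not_mem (L := mL) him
          omega
    · rintro ⟨i, j, hjw, him, hwp, hmp⟩
      apply hext2
      refine ⟨Fin.castAdd n i, Fin.castAdd n j, mem_extL _ _ _, mem_extL _ _ _, ?_, ?_⟩
      · intro j' hj'
        obtain rfl := Option.some.inj hj'
        exact ⟨mem_extL _ _ _, fun _ => idx_lt_lift (hwp i rfl)⟩
      · intro x hx
        obtain rfl := Option.some.inj hx
        exact ⟨mem_extL _ _ _, fun _ => idx_lt_lift (hmp j rfl)⟩
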